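/- arXiv:2301.07664 — 8 statements merged into one kernel-verified Lean document; each statement's English description precedes it below -/
import Mathlib

section
/- Let R be a finite local principal ideal ring with maximal ideal 𝔭 = πR, nilpotency index a, and let e = ord_𝔭(p). Suppose r ∈ R with ord_𝔭(r − 1) = m and mp > m + e. Then for every n ∈ ℕ, either r^{p^n} = 1 or ord_𝔭(r^{p^n} − 1) = m + ne. -/
open IsLocalRing

private lemma aux_unit {R : Type*} [CommRing R] [IsLocalRing R]
    (π : R) (hπ : Ideal.span {π} = maximalIdeal R) {y : R} {k : ℕ}
    (hy : y ∈ maximalIdeal R ^ k) (hy' : y ∉ maximalIdeal R ^ (k + 1)) :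
    ∃ c : R, IsUnit c ∧ y = c * π ^ k := by
  rw [← hπ, Ideal.span_singleton_pow, Ideal.mem_span_singleton] at hy
  obtain ⟨c, rfl⟩ := hy
  refine ⟨c, ?_, mul_comm _ _⟩
  by_contra hc
  apply hy'
  have hcm : c ∈ maximalIdeal R := (mem_maximalIdeal c).2 hc
  rw [← hπ] at hcm
  obtain ⟨d, rfl⟩ := Ideal.mem_span_singleton.1 hcm
  rw [← hπ, Ideal.span_singleton_pow, Ideal.mem_span_singleton]
  exact ⟨d, by ring⟩

private lemma aux_mul {R : Type*} [CommRing R] [IsLocalRing R]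
    (π : R) (hπ : Ideal.span {π} = maximalIdeal R) {x y : R} {j k : ℕ}
    (hx : x ∈ maximalIdeal R ^ j) (hx' : x ∉ maximalIdeal R ^ (j + 1))
    (hy : y ∈ maximalIdeal R ^ k) (hy' : y ∉ maximalIdeal R ^ (k + 1))
    (hne : maximalIdeal R ^ (j + k) ≠ ⊥) :
    x * y ∈ maximalIdeal R ^ (j + k) ∧ x * y ∉ maximalIdeal R ^ (j + k + 1) := by
  obtain ⟨u, hu, rfl⟩ := aux_unit π hπ hx hx'
  obtain ⟨v, hv, rfl⟩ := aux_unit π hπ hy hy'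
  constructor
  · rw [← hπ, Ideal.span_singleton_pow, Ideal.mem_span_singleton]
    exact ⟨u * v, by rw [pow_add]; ring⟩
  · intro hmem
    rw [← hπ, Ideal.span_singleton_pow, Ideal.mem_span_singleton] at hmem
    obtain ⟨c, hc⟩ := hmem
    obtain ⟨w, hw⟩ := hu.mul hv
    have h2 : π ^ (j + k) = π ^ (j + k) * (π * c * (↑w⁻¹ : R)) := by
      calc π ^ (j + k) = ((↑w⁻¹ : R) * ↑w) * π ^ (j + k) := by
            rw [Units.inv_mul, one_mul]
        _ = (↑w⁻¹ : R) * (u * π ^ j * (v * π ^ k)) := by rw [hw]; ring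
        _ = (↑w⁻¹ : R) * (π ^ (j + k + 1) * c) := by rw [hc]
        _ = π ^ (j + k) * (π * c * (↑w⁻¹ : R)) := by rw [pow_succ]; ring
    have h0 : π ^ (j + k) * (1 - π * c * (↑w⁻¹ : R)) = 0 := by
      rw [mul_sub, mul_one, ← h2, sub_self]
    have hmm : π * c * (↑w⁻¹ : R) ∈ maximalIdeal R := by
      rw [← hπ]
      exact Ideal.mem_span_singleton.2 ⟨c * (↑w⁻¹ : R), by ring⟩
    have hunit : IsUnit (1 - π * c * (↑w⁻¹ : R)) :=
      isUnit_one_sub_self_of_mem_nonunits _ ((mem_maximalIdeal _).1 hmm)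
    have hz : π ^ (j + k) = 0 := (hunit.mul_left_eq_zero).1 h0
    apply hne
    rw [← hπ, Ideal.span_singleton_pow, Ideal.span_singleton_eq_bot]
    exact hz

private lemma aux_key {R : Type*} [CommRing R] [IsLocalRing R]
    (π : R) (hπ : Ideal.span {π} = maximalIdeal R)
    (p e m : ℕ) (hp : p.Prime)
    (hpm : (p : R) ∈ maximalIdeal R ^ e)
    (hpm' : (p : R) ∉ maximalIdeal R ^ (e + 1))
    (r : R) (hm : r - 1 ∈ maximalIdeal R ^ m)
    (hm' : r - 1 ∉ maximalIdeal R ^ (m + 1))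
    (hineq : m + e < m * p) :
    r ^ p = 1 ∨ (r ^ p - 1 ∈ maximalIdeal R ^ (m + e) ∧
      r ^ p - 1 ∉ maximalIdeal R ^ (m + e + 1)) := by
  obtain ⟨q, rfl⟩ : ∃ q, p = q + 2 := ⟨p - 2, by have := hp.two_le; omega⟩
  have hm1 : 1 ≤ m := by
    rcases Nat.eq_zero_or_pos m with h | h
    · subst h; simp at hineq
    · exact h
  set x := r - 1 with hxdef
  have hr : r = 1 + x := by rw [hxdef]; ring
  have hb : r ^ (q + 2) = ∑ k ∈ Finset.range (q + 3),
      x ^ k * 1 ^ (q + 2 - k) * ((q + 2).choose k : R) := by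
    rw [hr, add_comm, add_pow]
  have key : r ^ (q + 2) - 1 - x * ((q + 2 : ℕ) : R) =
      ∑ i ∈ Finset.range (q + 1),
        x ^ (i + 2) * 1 ^ (q + 2 - (i + 2)) * ((q + 2).choose (i + 2) : R) := by
    rw [hb]
    rw [show q + 3 = (q + 2) + 1 from rfl, Finset.sum_range_succ',
      show q + 2 = (q + 1) + 1 from rfl, Finset.sum_range_succ']
    simp [Nat.choose_one_right]
  have hsum : r ^ (q + 2) - 1 - x * ((q + 2 : ℕ) : R) ∈ maximalIdeal R ^ (m + e + 1) := by
    rw [key]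
    refine Ideal.sum_mem _ (fun i hi => ?_)
    rw [Finset.mem_range] at hi
    by_cases hiq : i = q
    · rw [hiq]
      simp only [Nat.choose_self, Nat.cast_one, mul_one, Nat.sub_self, pow_zero]
      have hx1 : x ^ (q + 2) ∈ (maximalIdeal R ^ m) ^ (q + 2) := Ideal.pow_mem_pow hm _
      rw [← pow_mul] at hx1
      exact Ideal.pow_le_pow_right hineq hx1
    · have hdvd : (q + 2) ∣ (q + 2).choose (i + 2) :=
        hp.dvd_choose_self (by omega : i + 2 ≠ 0) (by omega : i + 2 < q + 2)
      obtain ⟨t, ht⟩ := hdvd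
      have heq : x ^ (i + 2) * 1 ^ (q + 2 - (i + 2)) * ((q + 2).choose (i + 2) : R) =
          (x * x * ((q + 2 : ℕ) : R)) * (x ^ i * 1 ^ (q + 2 - (i + 2)) * (t : R)) := by
        rw [ht]; push_cast; ring
      rw [heq]
      have h2 : x * x * ((q + 2 : ℕ) : R) ∈ maximalIdeal R ^ (m + m + e) := by
        rw [pow_add, pow_add]
        exact Ideal.mul_mem_mul (Ideal.mul_mem_mul hm hm) hpm
      exact Ideal.pow_le_pow_right (by omega) (Ideal.mul_mem_right _ _ h2)
  have hxp : x * ((q + 2 : ℕ) : R) ∈ maximalIdeal R ^ (m + e) := by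
    rw [pow_add]
    exact Ideal.mul_mem_mul hm hpm
  by_cases hbot : maximalIdeal R ^ (m + e) = ⊥
  · left
    have h1 : r ^ (q + 2) - 1 ∈ maximalIdeal R ^ (m + e) := by
      have heq : r ^ (q + 2) - 1 = (r ^ (q + 2) - 1 - x * ((q + 2 : ℕ) : R)) +
          x * ((q + 2 : ℕ) : R) := by ring
      rw [heq]
      exact Ideal.add_mem _ (Ideal.pow_le_pow_right (by omega) hsum) hxp
    rw [hbot, Ideal.mem_bot, sub_eq_zero] at h1
    exact h1
  · right
    obtain ⟨hin, hnotin⟩ := aux_mul π hπ hm hm' hpm hpm' hbot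
    constructor
    · have heq : r ^ (q + 2) - 1 = (r ^ (q + 2) - 1 - x * ((q + 2 : ℕ) : R)) +
          x * ((q + 2 : ℕ) : R) := by ring
      rw [heq]
      exact Ideal.add_mem _ (Ideal.pow_le_pow_right (by omega) hsum) hxp
    · intro h
      apply hnotin
      have heq : x * ((q + 2 : ℕ) : R) = (r ^ (q + 2) - 1) -
          (r ^ (q + 2) - 1 - x * ((q + 2 : ℕ) : R)) := by ring
      rw [heq]
      exact Ideal.sub_mem _ h hsum

theorem stmt6 {R : Type*} [CommRing R] [IsLocalRing R] [IsPrincipalIdealRing R] [Finite R]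
    (π : R) (hπ : Ideal.span {π} = IsLocalRing.maximalIdeal R)
    (p e m a : ℕ) (hp : p.Prime)
    (hchar : (p : R) ∈ IsLocalRing.maximalIdeal R)
    (hpm : (p : R) ∈ IsLocalRing.maximalIdeal R ^ e)
    (hpm' : (p : R) ∉ IsLocalRing.maximalIdeal R ^ (e + 1))
    (ha : IsLocalRing.maximalIdeal R ^ a = ⊥)
    (hmin : ∀ l < a, IsLocalRing.maximalIdeal R ^ l ≠ ⊥)
    (r : R) (hm : r - 1 ∈ IsLocalRing.maximalIdeal R ^ m)
    (hm' : r - 1 ∉ IsLocalRing.maximalIdeal R ^ (m + 1))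
    (hineq : m + e < m * p) :
    ∀ n : ℕ, r ^ p ^ n = 1 ∨
      (r ^ p ^ n - 1 ∈ IsLocalRing.maximalIdeal R ^ (m + n * e) ∧
       r ^ p ^ n - 1 ∉ IsLocalRing.maximalIdeal R ^ (m + n * e + 1)) := by
  intro n
  induction n with
  | zero => right; simpa using ⟨hm, hm'⟩
  | succ n ih =>
    rcases ih with h1 | ⟨hin, hnotin⟩
    · left
      rw [pow_succ, pow_mul, h1, one_pow]
    · have hlt : m + n * e + e < (m + n * e) * p := by
        calc m + n * e + e = m + e + n * e := by ring
          _ < m * p + n * e := Nat.add_lt_add_right hineq _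
          _ ≤ m * p + n * e * p := Nat.add_le_add_left (Nat.le_mul_of_pos_right _ hp.pos) _
          _ = (m + n * e) * p := by ring
      rcases aux_key π hπ p e (m + n * e) hp hpm hpm' (r ^ p ^ n) hin hnotin hlt with
        h1 | ⟨h2, h3⟩
      · left
        rwa [pow_succ, pow_mul]
      · right
        have he : m + (n + 1) * e = m + n * e + e := by ring
        rw [he, pow_succ, pow_mul]
        exact ⟨h2, h3⟩
end

section
/- Let R be a finite local principal ideal ring with maximal ideal 𝔭 = πR, ramification index e = ord_𝔭(p), coefficient ring R_ω, and let q ∈ R_ω[Y] be a p-Eisenstein polynomial of degree e. If u ∈ R satisfies q(u) = 0, then u is a uniformizer of R, i.e. ord_𝔭(u) = 1. -/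
theorem stmt12 {R : Type*} [CommRing R] [IsLocalRing R] [IsPrincipalIdealRing R] [Finite R]
    (π : R) (hπ : Ideal.span {π} = IsLocalRing.maximalIdeal R)
    (p e : ℕ) (hp : p.Prime) (hpmem : (p : R) ∈ IsLocalRing.maximalIdeal R)
    (he : (p : R) ∈ IsLocalRing.maximalIdeal R ^ e)
    (he' : (p : R) ∉ IsLocalRing.maximalIdeal R ^ (e + 1))
    (R_ω : Subring R) (q : Polynomial R) (hmonic : q.Monic) (hdeg : q.natDegree = e)
    (hcoeff : ∀ i, q.coeff i ∈ R_ω)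
    (heis : ∀ i < e, ∃ c ∈ R_ω, q.coeff i = (p : R) * c)
    (h0 : ∃ v ∈ R_ω, IsUnit v ∧ q.coeff 0 = (p : R) * v)
    (u : R) (hu : q.eval u = 0) :
    u ∈ IsLocalRing.maximalIdeal R ∧ u ∉ IsLocalRing.maximalIdeal R ^ 2 := by
  set M := IsLocalRing.maximalIdeal R with hM
  have hepos : 1 ≤ e := by
    by_contra h
    push_neg at h
    interval_cases e
    · simp at he'
      exact he' hpmem
  -- expand the evaluation
  have hsum : (∑ i ∈ Finset.range e, q.coeff i * u ^ i) + u ^ e = 0 := by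
    have h1 : q.eval u = ∑ i ∈ Finset.range (e + 1), q.coeff i * u ^ i := by
      rw [Polynomial.eval_eq_sum_range, hdeg]
    have h2 : q.coeff e = 1 := by
      have := hmonic.coeff_natDegree
      rwa [hdeg] at this
    rw [h1, Finset.sum_range_succ, h2, one_mul] at hu
    exact hu
  -- u ∈ M
  have humem : u ∈ M := by
    have hue : u ^ e ∈ M := by
      have hsum' : u ^ e = -(∑ i ∈ Finset.range e, q.coeff i * u ^ i) :=
        eq_neg_of_add_eq_zero_right hsum
      rw [hsum']
      refine neg_mem (Ideal.sum_mem _ fun i hi => ?_)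
      obtain ⟨c, _, hc⟩ := heis i (Finset.mem_range.mp hi)
      rw [hc, mul_assoc]
      exact Ideal.mul_mem_right _ _ hpmem
    exact (IsLocalRing.maximalIdeal.isMaximal R).isPrime.mem_of_pow_mem e hue
  refine ⟨humem, fun hu2 => ?_⟩
  -- suppose u ∈ M^2 : derive p ∈ M^(e+1)
  obtain ⟨e', rfl⟩ : ∃ e', e = e' + 1 := ⟨e - 1, by omega⟩
  obtain ⟨v, _, hvunit, hv⟩ := h0
  have hterm : ∀ i ∈ Finset.range e', q.coeff (i + 1) * u ^ (i + 1) ∈ M ^ (e' + 1 + 1) := by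
    intro i hi
    obtain ⟨c, _, hc⟩ := heis (i + 1) (by simpa using Nat.succ_lt_succ (Finset.mem_range.mp hi))
    have hpu : (p : R) * u ∈ M ^ (e' + 1 + 1) := by
      rw [pow_succ]
      exact Ideal.mul_mem_mul he humem
    have h := Ideal.mul_mem_right (c * u ^ i) _ hpu
    have : q.coeff (i + 1) * u ^ (i + 1) = (p : R) * u * (c * u ^ i) := by
      rw [hc]; ring
    rw [this]; exact h
  have hue : u ^ (e' + 1) ∈ M ^ (e' + 1 + 1) := by
    have h1 : u ^ (e' + 1) ∈ (M ^ 2) ^ (e' + 1) := Ideal.pow_mem_pow hu2 _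
    rw [← pow_mul] at h1
    exact Ideal.pow_le_pow_right (by omega) h1
  have hpv : (p : R) * v ∈ M ^ (e' + 1 + 1) := by
    have hsplit : (∑ i ∈ Finset.range (e' + 1), q.coeff i * u ^ i)
        = (∑ i ∈ Finset.range e', q.coeff (i + 1) * u ^ (i + 1)) + q.coeff 0 * u ^ 0 := by
      exact Finset.sum_range_succ' _ _
    have : (p : R) * v = -((∑ i ∈ Finset.range e', q.coeff (i + 1) * u ^ (i + 1)) + u ^ (e' + 1)) := by
      rw [hsplit] at hsum
      rw [← hv]
      simp only [pow_zero, mul_one] at hsum ⊢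
      linear_combination hsum
    rw [this]
    exact neg_mem (add_mem (Ideal.sum_mem _ hterm) hue)
  obtain ⟨w, hw⟩ := hvunit.exists_right_inv
  have : (p : R) ∈ M ^ (e' + 1 + 1) := by
    have h := Ideal.mul_mem_right w _ hpv
    rwa [mul_assoc, hw, mul_one] at h
  exact he' this
end

section
/- Let R be a finite local principal ideal ring with maximal ideal 𝔭 = πR of nilpotency index a, coefficient ring R_ω, and canonical representatives ρ ⊆ R_ω. Then the set U of uniformizers of R (elements u with ord_𝔭(u) = 1) equals {t(π)·π : t ∈ R_ω[Y], t(0) ∈ R_ω^×}, and |U| = (|k| − 1)·|k|^{a−2}, where k is the residue field (assuming a ≥ 2). -/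
open IsLocalRing

section Helpers

variable {R : Type*} [CommRing R] [IsLocalRing R] [Finite R]

private lemma aux_unit_s13 {c : R} (hc : c ∉ maximalIdeal R) : IsUnit c := by
  by_contra h
  exact hc ((mem_maximalIdeal c).mpr (mem_nonunits_iff.mpr h))

private lemma aux_pow_step (n : ℕ) (hn : n ≠ 0) {x y : R}
    (hxy : x - y ∈ maximalIdeal R ^ n) :
    x ^ Nat.card (R ⧸ maximalIdeal R) - y ^ Nat.card (R ⧸ maximalIdeal R) ∈
      maximalIdeal R ^ (n + 1) := by
  set q := Nat.card (R ⧸ maximalIdeal R) with hq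
  have hxy1 : x - y ∈ maximalIdeal R := Ideal.pow_le_self hn hxy
  have key : (∑ i ∈ Finset.range q, x ^ i * y ^ (q - 1 - i)) ∈ maximalIdeal R := by
    letI : Field (R ⧸ maximalIdeal R) := Ideal.Quotient.field _
    haveI : Finite (R ⧸ maximalIdeal R) := Finite.of_surjective _ Ideal.Quotient.mk_surjective
    letI : Fintype (R ⧸ maximalIdeal R) := Fintype.ofFinite _
    rw [← Ideal.Quotient.eq_zero_iff_mem]
    have hx : Ideal.Quotient.mk (maximalIdeal R) x = Ideal.Quotient.mk (maximalIdeal R) y :=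
      Ideal.Quotient.eq.mpr hxy1
    have hterm : ∀ i ∈ Finset.range q,
        Ideal.Quotient.mk (maximalIdeal R) (x ^ i * y ^ (q - 1 - i)) =
          (Ideal.Quotient.mk (maximalIdeal R) y) ^ (q - 1) := by
      intro i hi
      rw [map_mul, map_pow, map_pow, hx, ← pow_add]
      congr 1
      have := Finset.mem_range.mp hi
      omega
    rw [map_sum, Finset.sum_congr rfl hterm, Finset.sum_const, Finset.card_range,
      nsmul_eq_mul]
    have hq0 : ((q : ℕ) : R ⧸ maximalIdeal R) = 0 := by
      rw [hq, Nat.card_eq_fintype_card]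
      exact FiniteField.cast_card_eq_zero _
    rw [hq0, zero_mul]
  have hgeom : x ^ q - y ^ q =
      (∑ i ∈ Finset.range q, x ^ i * y ^ (q - 1 - i)) * (x - y) := (geom_sum₂_mul x y q).symm
  rw [hgeom, pow_succ']
  exact Ideal.mul_mem_mul key hxy

private lemma aux_teich (a : ℕ) (ha : maximalIdeal R ^ a = ⊥) (v : R) :
    ∃ c : R, c ^ Nat.card (R ⧸ maximalIdeal R) = c ∧ v - c ∈ maximalIdeal R := by
  set q := Nat.card (R ⧸ maximalIdeal R) with hq
  have hstep : ∀ n : ℕ, v ^ q ^ (n + 1) - v ^ q ^ n ∈ maximalIdeal R ^ (n + 1) := by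
    intro n
    induction n with
    | zero =>
      simp only [zero_add, pow_one, pow_zero]
      letI : Field (R ⧸ maximalIdeal R) := Ideal.Quotient.field _
      haveI : Finite (R ⧸ maximalIdeal R) := Finite.of_surjective _ Ideal.Quotient.mk_surjective
      letI : Fintype (R ⧸ maximalIdeal R) := Fintype.ofFinite _
      rw [← Ideal.Quotient.eq_zero_iff_mem, map_sub, map_pow, sub_eq_zero, hq,
        Nat.card_eq_fintype_card]
      exact FiniteField.pow_card _
    | succ n ih =>
      have h2 := aux_pow_step (n + 1) (Nat.succ_ne_zero n) ih
      rw [← pow_mul, ← pow_mul, ← pow_succ, ← pow_succ] at h2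
      exact h2
  refine ⟨v ^ q ^ a, ?_, ?_⟩
  · have hb : v ^ q ^ (a + 1) - v ^ q ^ a ∈ (⊥ : Ideal R) := by
      rw [← ha]
      exact Ideal.pow_le_pow_right (Nat.le_succ a) (hstep a)
    have heq : v ^ q ^ (a + 1) = v ^ q ^ a := by
      rwa [Ideal.mem_bot, sub_eq_zero] at hb
    calc (v ^ q ^ a) ^ q = v ^ (q ^ a * q) := (pow_mul v _ q).symm
      _ = v ^ q ^ (a + 1) := by rw [pow_succ]
      _ = v ^ q ^ a := heq
  · have hall : ∀ n, v - v ^ q ^ n ∈ maximalIdeal R := by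
      intro n
      induction n with
      | zero => simpa using (maximalIdeal R).zero_mem
      | succ n ih =>
        have h' : v ^ q ^ (n + 1) - v ^ q ^ n ∈ maximalIdeal R :=
          Ideal.pow_le_self (Nat.succ_ne_zero n) (hstep n)
        have h2 := (maximalIdeal R).sub_mem ih h'
        convert h2 using 1
        ring
    exact hall a

private lemma aux_digits (π : R) (hπ : Ideal.span {π} = maximalIdeal R)
    (a : ℕ) (ha : maximalIdeal R ^ a = ⊥) (R_ω : Subring R)
    (hρ : {r : R | r ^ Nat.card (R ⧸ maximalIdeal R) = r} ⊆ ↑R_ω) :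
    ∀ n (v : R), ∃ t : Polynomial R, (∀ i, t.coeff i ∈ R_ω) ∧
      t.coeff 0 - v ∈ maximalIdeal R ∧ v - t.eval π ∈ maximalIdeal R ^ n := by
  have hπm : π ∈ maximalIdeal R := by
    rw [← hπ]; exact Ideal.mem_span_singleton_self π
  intro n
  induction n with
  | zero =>
    intro v
    obtain ⟨c, hc, hvc⟩ := aux_teich a ha v
    refine ⟨Polynomial.C c, ?_, ?_, ?_⟩
    · intro i
      rw [Polynomial.coeff_C]
      split_ifs
      · exact hρ hc
      · exact R_ω.zero_mem
    · rw [Polynomial.coeff_C_zero]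
      simpa using (maximalIdeal R).neg_mem hvc
    · simp
  | succ n ih =>
    intro v
    obtain ⟨c, hc, hvc⟩ := aux_teich a ha v
    have hmem : v - c ∈ Ideal.span {π} := by rw [hπ]; exact hvc
    obtain ⟨w, hw⟩ := Ideal.mem_span_singleton'.mp hmem
    obtain ⟨t', ht'c, ht'0, ht'⟩ := ih w
    refine ⟨Polynomial.C c + t' * Polynomial.X, ?_, ?_, ?_⟩
    · intro i
      cases i with
      | zero =>
        simp only [Polynomial.coeff_add, Polynomial.coeff_C_zero,
          Polynomial.mul_coeff_zero, Polynomial.coeff_X_zero, mul_zero, add_zero]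
        exact hρ hc
      | succ i =>
        simp only [Polynomial.coeff_add, Polynomial.coeff_C, Polynomial.coeff_mul_X,
          Nat.succ_ne_zero, if_false, zero_add]
        exact ht'c i
    · simp only [Polynomial.coeff_add, Polynomial.coeff_C_zero,
        Polynomial.mul_coeff_zero, Polynomial.coeff_X_zero, mul_zero, add_zero]
      simpa using (maximalIdeal R).neg_mem hvc
    · have heval : (Polynomial.C c + t' * Polynomial.X).eval π = c + t'.eval π * π := by
        simp
      rw [heval]
      have hrw : v - (c + t'.eval π * π) = (w - t'.eval π) * π := by
        rw [sub_add_eq_sub_sub, ← hw]; ring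
      rw [hrw, pow_succ]
      exact Ideal.mul_mem_mul ht' hπm

private lemma aux_not_le (a : ℕ) (ha : maximalIdeal R ^ a = ⊥)
    (hmin : ∀ m < a, maximalIdeal R ^ m ≠ ⊥) :
    ∀ i < a, ¬ (maximalIdeal R ^ i ≤ maximalIdeal R ^ (i + 1)) := by
  intro i hi hle
  have hmono : ∀ n, maximalIdeal R ^ i ≤ maximalIdeal R ^ (i + n) := by
    intro n
    induction n with
    | zero => exact le_refl _
    | succ n ih =>
      refine hle.trans ?_
      have : maximalIdeal R ^ i * maximalIdeal R ≤
          maximalIdeal R ^ (i + n) * maximalIdeal R := Ideal.mul_mono_left ih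
      rw [← pow_succ, ← pow_succ] at this
      calc maximalIdeal R ^ (i + 1) ≤ maximalIdeal R ^ (i + n + 1) := this
        _ = maximalIdeal R ^ (i + (n + 1)) := by ring_nf
  have hbot : maximalIdeal R ^ i = ⊥ := by
    have := hmono (a - i)
    rw [show i + (a - i) = a by omega, ha] at this
    exact le_bot_iff.mp this
  exact hmin i hi hbot

private lemma aux_card_quot (π : R) (hπ : Ideal.span {π} = maximalIdeal R)
    (a : ℕ) (ha : maximalIdeal R ^ a = ⊥)
    (hmin : ∀ m < a, maximalIdeal R ^ m ≠ ⊥) :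
    ∀ i ≤ a, Nat.card (R ⧸ maximalIdeal R ^ i) = Nat.card (R ⧸ maximalIdeal R) ^ i := by
  set q := Nat.card (R ⧸ maximalIdeal R) with hq
  have hC : ∀ I : Ideal R, Nat.card R = Nat.card (R ⧸ I) * Nat.card I := fun I =>
    AddSubgroup.card_eq_card_quotient_mul_card_addSubgroup I.toAddSubgroup
  have hπm : π ∈ maximalIdeal R := by
    rw [← hπ]; exact Ideal.mem_span_singleton_self π
  have hspan : ∀ i : ℕ, maximalIdeal R ^ i = Ideal.span {π ^ i} := by
    intro i; rw [← hπ, Ideal.span_singleton_pow]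
  -- the step
  have hstep : ∀ i < a, Nat.card (R ⧸ maximalIdeal R ^ (i + 1)) =
      Nat.card (R ⧸ maximalIdeal R ^ i) * q := by
    intro i hi
    have hle : maximalIdeal R ^ (i + 1) ≤ maximalIdeal R ^ i :=
      Ideal.pow_le_pow_right (Nat.le_succ i)
    set f := Ideal.Quotient.factor hle with hf
    have hsurj : Function.Surjective f := by
      intro y
      obtain ⟨x, rfl⟩ := Ideal.Quotient.mk_surjective y
      exact ⟨Ideal.Quotient.mk _ x, rfl⟩
    set g := f.toAddMonoidHom with hg
    have hgsurj : Function.Surjective g := hsurj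
    -- theta
    set θ : R →+ R ⧸ maximalIdeal R ^ (i + 1) :=
      { toFun := fun x => Ideal.Quotient.mk _ (x * π ^ i)
        map_zero' := by simp
        map_add' := by intro x y; simp [add_mul] } with hθ
    have hker : ∀ x : R, x ∈ θ.ker ↔ x ∈ maximalIdeal R := by
      intro x
      constructor
      · intro hx
        have hx' : x * π ^ i ∈ maximalIdeal R ^ (i + 1) := by
          have := AddMonoidHom.mem_ker.mp hx
          rwa [show θ x = Ideal.Quotient.mk _ (x * π ^ i) from rfl,
            Ideal.Quotient.eq_zero_iff_mem] at this
        by_contra hxm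
        obtain ⟨u, rfl⟩ := aux_unit_s13 hxm
        have hpi : π ^ i ∈ maximalIdeal R ^ (i + 1) := by
          have h2 := (maximalIdeal R ^ (i + 1)).mul_mem_left (↑u⁻¹) hx'
          rwa [← mul_assoc, Units.inv_mul, one_mul] at h2
        have : maximalIdeal R ^ i ≤ maximalIdeal R ^ (i + 1) := by
          rw [hspan i]
          exact Ideal.span_le.mpr (Set.singleton_subset_iff.mpr hpi)
        exact aux_not_le a ha hmin i hi this
      · intro hx
        have : x * π ^ i ∈ maximalIdeal R ^ (i + 1) := by
          rw [pow_succ']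
          exact Ideal.mul_mem_mul hx (by rw [hspan i]; exact Ideal.mem_span_singleton_self _)
        rw [AddMonoidHom.mem_ker, show θ x = Ideal.Quotient.mk _ (x * π ^ i) from rfl,
          Ideal.Quotient.eq_zero_iff_mem]
        exact this
    have hrange : ∀ y, y ∈ θ.range ↔ y ∈ g.ker := by
      intro y
      constructor
      · rintro ⟨x, rfl⟩
        rw [AddMonoidHom.mem_ker]
        show f (Ideal.Quotient.mk _ (x * π ^ i)) = 0
        rw [Ideal.Quotient.factor_mk, Ideal.Quotient.eq_zero_iff_mem, hspan i]
        exact Ideal.mem_span_singleton'.mpr ⟨x, rfl⟩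
      · intro hy
        obtain ⟨z, rfl⟩ := Ideal.Quotient.mk_surjective y
        have hz : z ∈ maximalIdeal R ^ i := by
          have := AddMonoidHom.mem_ker.mp hy
          have h2 : f (Ideal.Quotient.mk _ z) = 0 := this
          rwa [Ideal.Quotient.factor_mk, Ideal.Quotient.eq_zero_iff_mem] at h2
        rw [hspan i] at hz
        obtain ⟨x, hx⟩ := Ideal.mem_span_singleton'.mp hz
        exact ⟨x, by rw [show θ x = Ideal.Quotient.mk _ (x * π ^ i) from rfl, hx]⟩
    -- cardinalities
    haveI : Nonempty (maximalIdeal R) := ⟨⟨0, (maximalIdeal R).zero_mem⟩⟩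
    have hcardm_pos : 0 < Nat.card (maximalIdeal R) := Nat.card_pos
    have e1 : Nat.card θ.ker = Nat.card (maximalIdeal R) :=
      Nat.card_congr (Equiv.subtypeEquivRight hker)
    have e2 : Nat.card θ.range = Nat.card g.ker :=
      Nat.card_congr (Equiv.subtypeEquivRight hrange)
    have h3 : Nat.card R = Nat.card θ.range * Nat.card (maximalIdeal R) := by
      have := AddSubgroup.card_eq_card_quotient_mul_card_addSubgroup θ.ker (α := R)
      rwa [Nat.card_congr (QuotientAddGroup.quotientKerEquivRange θ).toEquiv, e1] at this
    have h4 : Nat.card R = q * Nat.card (maximalIdeal R) := hC (maximalIdeal R)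
    have h5 : Nat.card θ.range = q :=
      Nat.eq_of_mul_eq_mul_right hcardm_pos (h3.symm.trans h4)
    have h6 : Nat.card (R ⧸ maximalIdeal R ^ (i + 1)) =
        Nat.card (R ⧸ maximalIdeal R ^ i) * Nat.card g.ker := by
      have := AddSubgroup.card_eq_card_quotient_mul_card_addSubgroup g.ker
        (α := R ⧸ maximalIdeal R ^ (i + 1))
      rwa [Nat.card_congr (QuotientAddGroup.quotientKerEquivOfSurjective g hgsurj).toEquiv]
        at this
    rw [h6, ← e2, h5]
  intro i hi
  induction i with
  | zero =>
    haveI : Subsingleton (R ⧸ maximalIdeal R ^ 0) := by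
      rw [Ideal.Quotient.subsingleton_iff]
      rw [pow_zero]
      exact Ideal.one_eq_top
    rw [Nat.pow_zero]
    exact Nat.card_of_subsingleton (0 : R ⧸ maximalIdeal R ^ 0)
  | succ i ih =>
    rw [hstep i (by omega), ih (by omega), pow_succ]

end Helpers

theorem stmt13 {R : Type*} [CommRing R] [IsLocalRing R] [IsPrincipalIdealRing R] [Finite R]
    (π : R) (hπ : Ideal.span {π} = IsLocalRing.maximalIdeal R)
    (a : ℕ) (ha2 : 2 ≤ a) (ha : IsLocalRing.maximalIdeal R ^ a = ⊥)
    (hmin : ∀ m < a, IsLocalRing.maximalIdeal R ^ m ≠ ⊥)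
    (R_ω : Subring R)
    (hρ : {r : R | r ^ Nat.card (R ⧸ IsLocalRing.maximalIdeal R) = r} ⊆ ↑R_ω) :
    {u : R | u ∈ IsLocalRing.maximalIdeal R ∧ u ∉ IsLocalRing.maximalIdeal R ^ 2} =
      {x : R | ∃ t : Polynomial R, (∀ i, t.coeff i ∈ R_ω) ∧ IsUnit (t.coeff 0) ∧
        x = t.eval π * π} ∧
    Set.ncard {u : R | u ∈ IsLocalRing.maximalIdeal R ∧ u ∉ IsLocalRing.maximalIdeal R ^ 2} =
      (Nat.card (R ⧸ IsLocalRing.maximalIdeal R) - 1) *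
        Nat.card (R ⧸ IsLocalRing.maximalIdeal R) ^ (a - 2) := by
  set q := Nat.card (R ⧸ IsLocalRing.maximalIdeal R) with hq
  have hπm : π ∈ maximalIdeal R := by
    rw [← hπ]; exact Ideal.mem_span_singleton_self π
  have hπ2 : π ∉ maximalIdeal R ^ 2 := by
    intro h
    have hle : maximalIdeal R ^ 1 ≤ maximalIdeal R ^ 2 := by
      rw [pow_one, ← hπ, Ideal.span_le, Set.singleton_subset_iff, hπ]
      exact h
    exact aux_not_le a ha hmin 1 (by omega) hle
  constructor
  · ext x
    simp only [Set.mem_setOf_eq]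
    constructor
    · rintro ⟨hxm, hxm2⟩
      have hx' : x ∈ Ideal.span {π} := by rw [hπ]; exact hxm
      obtain ⟨v, hv⟩ := Ideal.mem_span_singleton'.mp hx'
      have hvm : v ∉ maximalIdeal R := by
        intro hvm
        apply hxm2
        rw [← hv, pow_two]
        exact Ideal.mul_mem_mul hvm hπm
      obtain ⟨t, htc, ht0, hte⟩ := aux_digits π hπ a ha R_ω hρ a v
      rw [ha, Ideal.mem_bot, sub_eq_zero] at hte
      refine ⟨t, htc, ?_, ?_⟩
      · apply aux_unit_s13
        intro h0
        apply hvm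
        have := (maximalIdeal R).sub_mem h0 ht0
        simpa using this
      · rw [← hte, hv]
    · rintro ⟨t, htc, ht0u, rfl⟩
      have heval : Polynomial.eval π t = π * Polynomial.eval π t.divX + t.coeff 0 := by
        conv_lhs => rw [← Polynomial.X_mul_divX_add t]
        rw [Polynomial.eval_add, Polynomial.eval_mul, Polynomial.eval_X, Polynomial.eval_C]
      have h1 : t.eval π - t.coeff 0 ∈ maximalIdeal R := by
        rw [heval]
        simpa using (maximalIdeal R).mul_mem_right (Polynomial.eval π t.divX) hπm
      have hu : IsUnit (t.eval π) := by
        apply aux_unit_s13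
        intro hmem
        have hc0 : t.coeff 0 ∈ maximalIdeal R := by
          have := (maximalIdeal R).sub_mem hmem h1
          simpa using this
        exact (maximalIdeal.isMaximal R).ne_top (Ideal.eq_top_of_isUnit_mem _ hc0 ht0u)
      refine ⟨(maximalIdeal R).mul_mem_left _ hπm, ?_⟩
      intro h
      obtain ⟨u, hueq⟩ := hu
      apply hπ2
      have h2 := (maximalIdeal R ^ 2).mul_mem_left (↑u⁻¹) h
      rwa [← hueq, ← mul_assoc, Units.inv_mul, one_mul] at h2
  · -- cardinality
    have hC : ∀ I : Ideal R, Nat.card R = Nat.card (R ⧸ I) * Nat.card I := fun I =>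
      AddSubgroup.card_eq_card_quotient_mul_card_addSubgroup I.toAddSubgroup
    have hquot := aux_card_quot π hπ a ha hmin
    have hcardR : Nat.card R = q ^ a := by
      have e : Nat.card (R ⧸ maximalIdeal R ^ a) = Nat.card R :=
        Nat.card_congr (Submodule.quotEquivOfEqBot (maximalIdeal R ^ a) ha).toEquiv
      rw [← e, hquot a le_rfl]
    haveI : Finite (R ⧸ maximalIdeal R) := Finite.of_surjective _ Ideal.Quotient.mk_surjective
    have hqpos : 0 < q := Nat.card_pos
    have hcmi : ∀ i, i ≤ a → Nat.card (maximalIdeal R ^ i : Ideal R) = q ^ (a - i) := by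
      intro i hi
      have h1 := hC (maximalIdeal R ^ i)
      rw [hcardR, hquot i hi] at h1
      have h2 : q ^ a = q ^ i * q ^ (a - i) := by
        rw [← pow_add]
        congr 1
        omega
      exact Nat.eq_of_mul_eq_mul_left (pow_pos hqpos i) (h1.symm.trans h2)
    have hm1 : Nat.card (maximalIdeal R ^ 1 : Ideal R) = q ^ (a - 1) := hcmi 1 (by omega)
    have hm2 : Nat.card (maximalIdeal R ^ 2 : Ideal R) = q ^ (a - 2) := hcmi 2 ha2
    have hsub : ((maximalIdeal R ^ 2 : Ideal R) : Set R) ⊆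
        ((maximalIdeal R : Ideal R) : Set R) := Ideal.pow_le_self two_ne_zero
    have hsetU : {u : R | u ∈ maximalIdeal R ∧ u ∉ maximalIdeal R ^ 2} =
        ((maximalIdeal R : Ideal R) : Set R) \ ((maximalIdeal R ^ 2 : Ideal R) : Set R) := rfl
    rw [hsetU, Set.ncard_diff hsub (Set.toFinite _)]
    have c1 : ((maximalIdeal R : Ideal R) : Set R).ncard = q ^ (a - 1) := by
      rw [← Nat.card_coe_set_eq]
      rw [← hm1]
      exact Nat.card_congr (Equiv.subtypeEquivRight (fun x => by rw [pow_one]; rfl))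
    have c2 : ((maximalIdeal R ^ 2 : Ideal R) : Set R).ncard = q ^ (a - 2) := by
      rw [← Nat.card_coe_set_eq]
      rw [← hm2]
      exact Nat.card_congr (Equiv.subtypeEquivRight (fun x => Iff.rfl))
    rw [c1, c2]
    have h3 : q ^ (a - 1) = q * q ^ (a - 2) := by
      rw [← pow_succ']
      congr 1
      omega
    rw [h3, Nat.sub_mul, one_mul]
end

section
/- Let K be a number field with ring of integers O_K, let A ⊆ K be an order (a subring that is a free ℤ-module of rank [K:ℚ]), and let I be an invertible fractional ideal of A. Then for every nonzero ideal J of A there exists x ∈ K with A = xI + J. -/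
open FractionalIdeal

set_option maxHeartbeats 1000000 in

theorem stmt14 {K : Type*} [Field K] [NumberField K]
    (A : Subalgebra ℤ K) (hfree : Module.Free ℤ ↥A)
    (hrank : Module.finrank ℤ ↥A = Module.finrank ℚ K)
    [IsFractionRing ↥A K]
    (I : FractionalIdeal (nonZeroDivisors ↥A) K)
    (hI : ∃ I' : FractionalIdeal (nonZeroDivisors ↥A) K, I * I' = 1)
    (J : Ideal ↥A) (hJ : J ≠ ⊥) :
    ∃ x : K, FractionalIdeal.spanSingleton (nonZeroDivisors ↥A) x * I +
      (J : FractionalIdeal (nonZeroDivisors ↥A) K) = 1 := by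
  classical
  obtain ⟨I', hII'⟩ := hI
  have hinj : Function.Injective (algebraMap ↥A K) := IsFractionRing.injective ↥A K
  -- A is a finite ℤ-module
  have hfin : Module.Finite ℤ ↥A := by
    rw [← Module.rank_lt_aleph0_iff]
    by_contra h
    rw [not_lt] at h
    have h0 : Module.finrank ℤ ↥A = 0 := Cardinal.toNat_apply_of_aleph0_le h
    have : 0 < Module.finrank ℚ K := Module.finrank_pos
    omega
  -- J contains a nonzero integer
  have hcomap : J.comap (algebraMap ℤ ↥A) ≠ ⊥ := by
    obtain ⟨a, haJ, ha0⟩ := Submodule.exists_mem_ne_zero_of_ne_bot hJ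
    exact Ideal.comap_ne_bot_of_integral_mem ha0 haJ (IsIntegral.of_finite ℤ a)
  obtain ⟨N, hNJ, hN0⟩ := Submodule.exists_mem_ne_zero_of_ne_bot hcomap
  -- the quotient A/J is finite
  have hqfin : Module.Finite ℤ (↥A ⧸ J) :=
    Module.Finite.of_surjective
      ((Ideal.Quotient.mk J : ↥A →+* ↥A ⧸ J)).toAddMonoidHom.toIntLinearMap
      Ideal.Quotient.mk_surjective
  have hQ : Finite (↥A ⧸ J) := by
    apply Module.finite_of_fg_torsion
    intro x
    obtain ⟨y, rfl⟩ := Ideal.Quotient.mk_surjective x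
    refine ⟨⟨N, mem_nonZeroDivisors_of_ne_zero hN0⟩, ?_⟩
    have hy : (N : ℤ) • y ∈ J := by
      have : (N : ℤ) • y = algebraMap ℤ ↥A N * y := Algebra.smul_def _ _
      rw [this]
      exact J.mul_mem_right y hNJ
    rw [Submonoid.smul_def]
    have hmk : Ideal.Quotient.mk J ((N : ℤ) • y) = (N : ℤ) • Ideal.Quotient.mk J y :=
      map_zsmul (Ideal.Quotient.mk J).toAddMonoidHom _ _
    rw [← hmk]
    exact Ideal.Quotient.eq_zero_iff_mem.mpr hy
  -- finitely many maximal ideals containing J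
  have hSfin : {m : Ideal ↥A | m.IsMaximal ∧ J ≤ m}.Finite := by
    rw [Set.finite_coe_iff.symm]
    have : Finite (Ideal (↥A ⧸ J)) :=
      Finite.of_injective (fun I : Ideal (↥A ⧸ J) => (I : Set (↥A ⧸ J))) SetLike.coe_injective
    refine Finite.of_injective
      (fun m : {m : Ideal ↥A // m.IsMaximal ∧ J ≤ m} =>
        Ideal.map (Ideal.Quotient.mk J) m.1) ?_
    rintro ⟨m1, _, h1⟩ ⟨m2, _, h2⟩ h
    have e1 : Ideal.comap (Ideal.Quotient.mk J) (Ideal.map (Ideal.Quotient.mk J) m1) = m1 := by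
      rw [Ideal.comap_map_of_surjective _ Ideal.Quotient.mk_surjective, ← RingHom.ker_eq_comap_bot,
        Ideal.mk_ker, sup_eq_left.mpr h1]
    have e2 : Ideal.comap (Ideal.Quotient.mk J) (Ideal.map (Ideal.Quotient.mk J) m2) = m2 := by
      rw [Ideal.comap_map_of_surjective _ Ideal.Quotient.mk_surjective, ← RingHom.ker_eq_comap_bot,
        Ideal.mk_ker, sup_eq_left.mpr h2]
    simp only [Subtype.mk_eq_mk]
    rw [← e1, ← e2]
    simp only at h
    rw [h]
  set S : Finset (Ideal ↥A) := hSfin.toFinset with hS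
  have hmemS : ∀ m : Ideal ↥A, m ∈ S ↔ m.IsMaximal ∧ J ≤ m := by
    intro m; rw [hS, Set.Finite.mem_toFinset]; rfl
  -- for each maximal ideal over J, find b ∈ I', a ∈ I with b*a ∉ m
  have hb : ∀ m ∈ S, ∃ b ∈ I', ∃ a ∈ I, b * a ∉ (m : FractionalIdeal (nonZeroDivisors ↥A) K) := by
    intro m hm
    obtain ⟨hmax, -⟩ := (hmemS m).mp hm
    by_contra h
    push_neg at h
    have h1 : (1 : K) ∈ I * I' := by rw [hII']; exact FractionalIdeal.one_mem_one _
    rw [← FractionalIdeal.mem_coe, FractionalIdeal.coe_mul] at h1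
    have h2 : (1 : K) ∈ ((m : FractionalIdeal (nonZeroDivisors ↥A) K) : Submodule ↥A K) := by
      refine Submodule.mul_induction_on h1 ?_ fun u v hu hv => add_mem hu hv
      intro u hu v hv
      refine FractionalIdeal.mem_coe.mpr ?_
      have := h v (FractionalIdeal.mem_coe.mp hv) u (FractionalIdeal.mem_coe.mp hu)
      rwa [mul_comm] at this
    obtain ⟨r, hrm, hr1⟩ := (FractionalIdeal.mem_coeIdeal _).mp (FractionalIdeal.mem_coe.mp h2)
    have : r = 1 := hinj (by rw [hr1, _root_.map_one])
    exact hmax.ne_top (Ideal.eq_top_iff_one m |>.mpr (this ▸ hrm))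
  choose b hbI' a haI hba using hb
  -- CRT elements
  have hcrt : ∀ m ∈ S, ∃ e : ↥A, (1 : ↥A) - e ∈ m ∧ ∀ m' ∈ S.erase m, e ∈ m' := by
    intro m hm
    obtain ⟨hmax, -⟩ := (hmemS m).mp hm
    have htop : m ⊔ (S.erase m).prod id = ⊤ := by
      by_contra hne
      have heq : m = m ⊔ (S.erase m).prod id := hmax.eq_of_le hne le_sup_left
      have hle : (S.erase m).prod id ≤ m := le_of_le_of_eq le_sup_right heq.symm
      obtain ⟨m', hm'S, hm'le⟩ := (hmax.isPrime.prod_le).mp hle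
      have hmax' : (m' : Ideal ↥A).IsMaximal :=
        ((hmemS m').mp (Finset.mem_of_mem_erase hm'S)).1
      have : m' = m := hmax'.eq_of_le hmax.ne_top hm'le
      exact (Finset.ne_of_mem_erase hm'S) this
    have h1 : (1 : ↥A) ∈ m ⊔ (S.erase m).prod id := htop ▸ Submodule.mem_top
    obtain ⟨u, hu, e, he, hue⟩ := Submodule.mem_sup.mp h1
    refine ⟨e, ?_, ?_⟩
    · have : (1 : ↥A) - e = u := by rw [← hue]; ring
      rwa [this]
    · intro m' hm'
      exact (le_trans Ideal.prod_le_inf (Finset.inf_le hm')) he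
  choose e he1 he2 using hcrt
  -- the element x
  set x : K := ∑ p ∈ S.attach, algebraMap ↥A K (e p.1 p.2) * b p.1 p.2 with hx
  have hxI' : x ∈ I' := by
    rw [hx]
    refine FractionalIdeal.mem_coe.mp (Submodule.sum_mem _ ?_)
    intro p _
    rw [← Algebra.smul_def]
    exact Submodule.smul_mem _ _ (FractionalIdeal.mem_coe.mpr (hbI' p.1 p.2))
  refine ⟨x, ?_⟩
  -- the fractional ideal is integral
  have hle1 : FractionalIdeal.spanSingleton (nonZeroDivisors ↥A) x * I +
      (J : FractionalIdeal (nonZeroDivisors ↥A) K) ≤ 1 := by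
    rw [← FractionalIdeal.sup_eq_add]
    apply sup_le
    · calc FractionalIdeal.spanSingleton (nonZeroDivisors ↥A) x * I
          ≤ I' * I := _root_.mul_le_mul_left (FractionalIdeal.spanSingleton_le_iff_mem.mpr hxI') I
        _ = 1 := by rw [mul_comm, hII']
    · exact FractionalIdeal.coeIdeal_le_one
  obtain ⟨F₀, hF₀⟩ := FractionalIdeal.le_one_iff_exists_coeIdeal.mp hle1
  rw [← hF₀]
  -- suppose F₀ is not ⊤
  by_contra hne
  have hF₀ne : F₀ ≠ ⊤ := by
    rintro rfl
    exact hne (by rw [FractionalIdeal.coeIdeal_top])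
  obtain ⟨m, hmax, hF₀m⟩ := Ideal.exists_le_maximal F₀ hF₀ne
  have hJm : J ≤ m := by
    have : (J : FractionalIdeal (nonZeroDivisors ↥A) K) ≤ (F₀ : FractionalIdeal _ K) := by
      rw [hF₀, ← FractionalIdeal.sup_eq_add]; exact le_sup_right
    exact le_trans ((FractionalIdeal.coeIdeal_le_coeIdeal K).mp this) hF₀m
  have hmS : m ∈ S := (hmemS m).mpr ⟨hmax, hJm⟩
  -- x * a ∈ m
  have hxam : x * a m hmS ∈ (m : FractionalIdeal (nonZeroDivisors ↥A) K) := by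
    have h1 : x * a m hmS ∈ FractionalIdeal.spanSingleton (nonZeroDivisors ↥A) x * I :=
      FractionalIdeal.mul_mem_mul (FractionalIdeal.mem_spanSingleton_self _ x) (haI m hmS)
    have h2 : FractionalIdeal.spanSingleton (nonZeroDivisors ↥A) x * I ≤
        (m : FractionalIdeal (nonZeroDivisors ↥A) K) := by
      calc FractionalIdeal.spanSingleton (nonZeroDivisors ↥A) x * I
          ≤ (F₀ : FractionalIdeal _ K) := by
            rw [hF₀, ← FractionalIdeal.sup_eq_add]; exact le_sup_left
        _ ≤ (m : FractionalIdeal _ K) := (FractionalIdeal.coeIdeal_le_coeIdeal K).mpr hF₀m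
    exact h2 h1
  -- key sublemma: r ∈ m, z ∈ 1 implies algebraMap r * z ∈ m
  have hkey : ∀ (r : ↥A), r ∈ m → ∀ z : K, z ∈ (1 : FractionalIdeal (nonZeroDivisors ↥A) K) →
      algebraMap ↥A K r * z ∈ (m : FractionalIdeal (nonZeroDivisors ↥A) K) := by
    intro r hr z hz
    obtain ⟨s, hs⟩ := (FractionalIdeal.mem_one_iff _).mp hz
    refine (FractionalIdeal.mem_coeIdeal _).mpr ⟨r * s, m.mul_mem_right s hr, ?_⟩
    rw [_root_.map_mul, hs]
  have hone : ∀ p : {q // q ∈ S}, b p.1 p.2 * a m hmS ∈ (1 : FractionalIdeal (nonZeroDivisors ↥A) K) := by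
    intro p
    have := FractionalIdeal.mul_mem_mul (hbI' p.1 p.2) (haI m hmS)
    rwa [mul_comm I' I, hII'] at this
  -- decompose x * a
  have hdecomp : x * a m hmS - b m hmS * a m hmS ∈ (m : FractionalIdeal (nonZeroDivisors ↥A) K) := by
    have hxa : x * a m hmS = ∑ p ∈ S.attach, algebraMap ↥A K (e p.1 p.2) * (b p.1 p.2 * a m hmS) := by
      rw [hx, Finset.sum_mul]
      congr 1; ext p; ring
    rw [hxa, ← Finset.add_sum_erase _ _ (Finset.mem_attach S ⟨m, hmS⟩)]
    have hterm : algebraMap ↥A K (e m hmS) * (b m hmS * a m hmS) - b m hmS * a m hmS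
        = algebraMap ↥A K (e m hmS - 1) * (b m hmS * a m hmS) := by
      rw [map_sub, _root_.map_one]; ring
    have h1 : algebraMap ↥A K (e m hmS) * (b m hmS * a m hmS) - b m hmS * a m hmS ∈
        (m : FractionalIdeal (nonZeroDivisors ↥A) K) := by
      rw [hterm]
      refine hkey _ ?_ _ (hone ⟨m, hmS⟩)
      have := he1 m hmS
      simpa using m.neg_mem this
    have h2 : ∑ p ∈ S.attach.erase ⟨m, hmS⟩, algebraMap ↥A K (e p.1 p.2) * (b p.1 p.2 * a m hmS) ∈
        (m : FractionalIdeal (nonZeroDivisors ↥A) K) := by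
      refine FractionalIdeal.mem_coe.mp (Submodule.sum_mem _ ?_)
      intro p hp
      refine FractionalIdeal.mem_coe.mpr (hkey _ ?_ _ (hone p))
      apply he2 p.1 p.2
      refine Finset.mem_erase.mpr ⟨?_, hmS⟩
      intro hpm
      exact (Finset.ne_of_mem_erase hp) (Subtype.ext hpm.symm)
    have : algebraMap ↥A K (e m hmS) * (b m hmS * a m hmS) +
        (∑ p ∈ S.attach.erase ⟨m, hmS⟩, algebraMap ↥A K (e p.1 p.2) * (b p.1 p.2 * a m hmS)) -
        b m hmS * a m hmS =
        (algebraMap ↥A K (e m hmS) * (b m hmS * a m hmS) - b m hmS * a m hmS) +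
        ∑ p ∈ S.attach.erase ⟨m, hmS⟩, algebraMap ↥A K (e p.1 p.2) * (b p.1 p.2 * a m hmS) := by
      ring
    rw [this]
    exact FractionalIdeal.mem_coe.mp
      (add_mem (FractionalIdeal.mem_coe.mpr h1) (FractionalIdeal.mem_coe.mpr h2))
  refine hba m hmS ?_
  have := sub_mem (FractionalIdeal.mem_coe.mpr hxam) (FractionalIdeal.mem_coe.mpr hdecomp)
  refine FractionalIdeal.mem_coe.mp ?_
  convert this using 1
  ring
end

section
/- Let A be an order in a number field K, J an invertible nonzero ideal of A, and m ∈ ℕ. Then the index satisfies [A : J^m] = [A : J]^m. More generally, if J and H are nonzero ideals of A with at least one invertible, then [A : JH] = [A : J]·[A : H]. -/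
open FractionalIdeal
section Aux
variable {R : Type*} [CommRing R] [IsDomain R] {K : Type*} [Field K] [Algebra R K]
  [IsFractionRing R K]

lemma aux_exists_generator_mod
    (hfin : ∀ I : Ideal R, I ≠ ⊥ → Finite (R ⧸ I))
    (J M : Ideal R) (hM : M ≠ ⊥)
    (I' : FractionalIdeal (nonZeroDivisors R) K)
    (hJI : (J : FractionalIdeal (nonZeroDivisors R) K) * I' = 1) :
    ∃ a ∈ J, J = Ideal.span {a} ⊔ J * M := by
  classical
  -- the set of maximal ideals containing M is finite
  haveI : Finite (R ⧸ M) := hfin M hM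
  have hTfin : {P : Ideal R | P.IsMaximal ∧ M ≤ P}.Finite := by
    have hinj : Set.InjOn (fun P : Ideal R => P.map (Ideal.Quotient.mk M))
        {P : Ideal R | P.IsMaximal ∧ M ≤ P} := by
      intro P₁ h₁ P₂ h₂ h
      have k₁ := Ideal.comap_map_of_surjective (Ideal.Quotient.mk M)
        Ideal.Quotient.mk_surjective P₁
      have k₂ := Ideal.comap_map_of_surjective (Ideal.Quotient.mk M)
        Ideal.Quotient.mk_surjective P₂
      have hker : Ideal.comap (Ideal.Quotient.mk M) ⊥ = M := by
        rw [← RingHom.ker_eq_comap_bot, Ideal.mk_ker]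
      rw [hker, sup_eq_left.mpr h₁.2] at k₁
      rw [hker, sup_eq_left.mpr h₂.2] at k₂
      have h' : Ideal.map (Ideal.Quotient.mk M) P₁ = Ideal.map (Ideal.Quotient.mk M) P₂ := h
      rw [← k₁, ← k₂, h']
    haveI : Finite (Ideal (R ⧸ M)) :=
      Finite.of_injective (fun I : Ideal (R ⧸ M) => (I : Set (R ⧸ M))) SetLike.coe_injective
    exact Set.Finite.of_finite_image (Set.toFinite _) hinj
  set T : Finset (Ideal R) := hTfin.toFinset with hT
  have hmemT : ∀ {P : Ideal R}, P ∈ T ↔ P.IsMaximal ∧ M ≤ P := by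
    intro P; rw [hT, Set.Finite.mem_toFinset]; rfl
  -- J * P ≠ J for maximal P
  have hJP : ∀ P : Ideal R, P.IsMaximal → J * P ≠ J := by
    intro P hPmax h
    apply hPmax.ne_top
    apply coeIdeal_injective' (P := K) (le_refl (nonZeroDivisors R))
    show (P : FractionalIdeal (nonZeroDivisors R) K) = ((⊤ : Ideal R) : FractionalIdeal (nonZeroDivisors R) K)
    rw [coeIdeal_top]
    calc (P : FractionalIdeal (nonZeroDivisors R) K)
        = (P : FractionalIdeal (nonZeroDivisors R) K) * 1 := (mul_one _).symm
      _ = (P : FractionalIdeal (nonZeroDivisors R) K) * ((J : FractionalIdeal (nonZeroDivisors R) K) * I') := by rw [hJI]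
      _ = ((J * P : Ideal R) : FractionalIdeal (nonZeroDivisors R) K) * I' := by
          rw [coeIdeal_mul]; ring
      _ = (J : FractionalIdeal (nonZeroDivisors R) K) * I' := by rw [h]
      _ = 1 := hJI
  -- choose aP ∈ J \ J * P
  have hlt : ∀ P : {P // P ∈ T}, J * P.1 < J :=
    fun P => lt_of_le_of_ne Ideal.mul_le_left (hJP P.1 (hmemT.mp P.2).1)
  choose aP haP haP' using fun P : {P // P ∈ T} => SetLike.exists_of_lt (hlt P)
  -- choose eP ≡ 1 mod P, ≡ 0 mod other members of T
  have hcop : ∀ P : {P // P ∈ T}, (1 : R) ∈ P.1 ⊔ ∏ Q ∈ T.erase P.1, Q := by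
    intro P
    have : IsCoprime P.1 (∏ Q ∈ T.erase P.1, Q) := by
      apply IsCoprime.prod_right
      intro Q hQ
      rw [Ideal.isCoprime_iff_sup_eq]
      exact Ideal.IsMaximal.coprime_of_ne (hmemT.mp P.2).1
        (hmemT.mp (Finset.mem_of_mem_erase hQ)).1 (Finset.ne_of_mem_erase hQ).symm
    rw [this.sup_eq]; trivial
  have hchoice : ∀ P : {P // P ∈ T}, ∃ e : R, 1 - e ∈ P.1 ∧ ∀ Q ∈ T.erase P.1, e ∈ Q := by
    intro P
    obtain ⟨p, hp, q, hq, hpq⟩ := Submodule.mem_sup.mp (hcop P)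
    refine ⟨q, ?_, ?_⟩
    · have : (1 : R) - q = p := by rw [← hpq]; ring
      rw [this]; exact hp
    · intro Q hQ
      exact (Ideal.prod_le_inf.trans (Finset.inf_le hQ)) hq
  choose eP heP1 heP2 using hchoice
  set a : R := ∑ P ∈ T.attach, eP P * aP P with ha
  have haJ : a ∈ J := Ideal.sum_mem J fun P _ => Ideal.mul_mem_left J _ (haP P)
  -- a ∉ J * P for each P ∈ T
  have hdiff : ∀ P : {P // P ∈ T}, a - aP P ∈ J * P.1 := by
    intro P
    rw [ha, ← Finset.add_sum_erase T.attach _ (Finset.mem_attach T P)]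
    have h1 : eP P * aP P - aP P ∈ J * P.1 := by
      have : eP P * aP P - aP P = aP P * (-(1 - eP P)) := by ring
      rw [this]
      exact Ideal.mul_mem_mul (haP P) (neg_mem (heP1 P))
    have h2 : ∑ Q ∈ (T.attach.erase P), eP Q * aP Q ∈ J * P.1 := by
      apply Ideal.sum_mem
      intro Q hQ
      have hne : P.1 ≠ Q.1 := fun h => (Finset.ne_of_mem_erase hQ) (Subtype.ext h.symm)
      have : eP Q ∈ P.1 := heP2 Q P.1 (Finset.mem_erase.mpr ⟨hne, P.2⟩)
      rw [mul_comm J P.1]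
      exact Ideal.mul_mem_mul this (haP Q)
    have : (eP P * aP P + ∑ Q ∈ T.attach.erase P, eP Q * aP Q) - aP P
        = (eP P * aP P - aP P) + ∑ Q ∈ T.attach.erase P, eP Q * aP Q := by ring
    rw [this]
    exact Ideal.add_mem _ h1 h2
  have hnot : ∀ P : {P // P ∈ T}, a ∉ J * P.1 := by
    intro P h
    exact haP' P (by have := Ideal.sub_mem _ h (hdiff P); simpa using this)
  -- now prove J = span{a} ⊔ J*M
  refine ⟨a, haJ, ?_⟩
  set N : Ideal R := Ideal.span {a} ⊔ J * M with hN
  have hNJ : N ≤ J := sup_le ((Ideal.span_singleton_le_iff_mem J).mpr haJ) Ideal.mul_le_left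
  by_contra hne
  have hne' : N ≠ J := fun h => hne h.symm
  have hle1 : I' * (N : FractionalIdeal (nonZeroDivisors R) K) ≤ 1 := by
    calc I' * (N : FractionalIdeal (nonZeroDivisors R) K)
        ≤ I' * (J : FractionalIdeal (nonZeroDivisors R) K) :=
          mul_right_mono (a := I') (by rwa [coeIdeal_le_coeIdeal K])
      _ = 1 := by rw [mul_comm]; exact hJI
  obtain ⟨C, hC⟩ := le_one_iff_exists_coeIdeal.mp hle1
  have hJC : J * C = N := by
    apply coeIdeal_injective' (P := K) (le_refl (nonZeroDivisors R))
    show ((J * C : Ideal R) : FractionalIdeal (nonZeroDivisors R) K) = (N : FractionalIdeal (nonZeroDivisors R) K)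
    rw [coeIdeal_mul, hC]
    calc (J : FractionalIdeal (nonZeroDivisors R) K) * (I' * N)
        = ((J : FractionalIdeal (nonZeroDivisors R) K) * I') * N := by ring
      _ = (N : FractionalIdeal (nonZeroDivisors R) K) := by rw [hJI, one_mul]
  have hCne : C ≠ ⊤ := by
    intro h
    rw [h, Ideal.mul_top] at hJC
    exact hne' hJC.symm
  obtain ⟨P, hPmax, hCP⟩ := Ideal.exists_le_maximal C hCne
  have hMC : M ≤ C := by
    rw [← coeIdeal_le_coeIdeal (K := K), hC]
    calc (M : FractionalIdeal (nonZeroDivisors R) K)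
        = ((J : FractionalIdeal (nonZeroDivisors R) K) * I') * M := by rw [hJI, one_mul]
      _ = I' * ((J * M : Ideal R) : FractionalIdeal (nonZeroDivisors R) K) := by
          rw [coeIdeal_mul]; ring
      _ ≤ I' * (N : FractionalIdeal (nonZeroDivisors R) K) :=
          mul_right_mono (a := I') (by rw [coeIdeal_le_coeIdeal K]; exact le_sup_right)
  have hPT : P ∈ T := hmemT.mpr ⟨hPmax, hMC.trans hCP⟩
  apply hnot ⟨P, hPT⟩
  have haN : a ∈ N := Ideal.mem_sup_left (Ideal.mem_span_singleton_self a)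
  rw [← hJC] at haN
  exact (Ideal.mul_mono_right hCP) haN

end Aux

section Aux2
variable {R : Type*} [CommRing R] [IsDomain R] {K : Type*} [Field K] [Algebra R K]
  [IsFractionRing R K]

lemma aux_card_mul
    (hfin : ∀ I : Ideal R, I ≠ ⊥ → Finite (R ⧸ I))
    (J M : Ideal R) (hM : M ≠ ⊥)
    (hspan : ∃ a ∈ J, J = Ideal.span {a} ⊔ J * M)
    (I' : FractionalIdeal (nonZeroDivisors R) K)
    (hJI : (J : FractionalIdeal (nonZeroDivisors R) K) * I' = 1) :
    Nat.card (R ⧸ (J * M)) = Nat.card (R ⧸ J) * Nat.card (R ⧸ M) := by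
  obtain ⟨a, haJ, hJa⟩ := hspan
  have key := Submodule.card_quotient_mul_card_quotient (J : Submodule R R)
    ((J * M : Ideal R) : Submodule R R) Ideal.mul_le_left
  -- the map x ↦ x * a mod J*M
  set g : R →ₗ[R] R ⧸ ((J * M : Ideal R) : Submodule R R) :=
    (Submodule.mkQ _) ∘ₗ (LinearMap.toSpanSingleton R R a) with hg
  have hker : LinearMap.ker g = (M : Submodule R R) := by
    ext x
    have hgx : g x = Submodule.Quotient.mk (x • a) := rfl
    rw [LinearMap.mem_ker, hgx, Submodule.Quotient.mk_eq_zero]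
    constructor
    · intro hx
      have hxa : x * a ∈ J * M := by simpa [smul_eq_mul] using hx
      have hle : Ideal.span {x} * J ≤ J * M := by
        rw [Ideal.mul_le]
        intro r hr s hs
        obtain ⟨c, rfl⟩ := Ideal.mem_span_singleton'.mp hr
        have hs' : s ∈ (Ideal.span {a} : Ideal R) ⊔ J * M := hJa ▸ hs
        obtain ⟨u, hu, w, hw, rfl⟩ := Submodule.mem_sup.mp hs'
        obtain ⟨d, rfl⟩ := Ideal.mem_span_singleton'.mp hu
        have hre : (c * x) * (d * a + w) = (c * d) * (x * a) + (c * x) * w := by ring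
        rw [hre]
        exact Ideal.add_mem _ (Ideal.mul_mem_left _ _ hxa) (Ideal.mul_mem_left _ _ hw)
      have hfrac : (Ideal.span {x} : FractionalIdeal (nonZeroDivisors R) K)
          ≤ (M : FractionalIdeal (nonZeroDivisors R) K) := by
        have h1 : ((Ideal.span {x} * J : Ideal R) : FractionalIdeal (nonZeroDivisors R) K)
            ≤ ((J * M : Ideal R) : FractionalIdeal (nonZeroDivisors R) K) := by
          rw [coeIdeal_le_coeIdeal K]; exact hle
        rw [coeIdeal_mul, coeIdeal_mul] at h1
        have h2 := mul_right_mono (a := I') h1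
        calc (Ideal.span {x} : FractionalIdeal (nonZeroDivisors R) K)
            = I' * ((Ideal.span {x} : FractionalIdeal (nonZeroDivisors R) K) * J) := by
              rw [show I' * ((Ideal.span {x} : FractionalIdeal (nonZeroDivisors R) K) * J)
                = (Ideal.span {x} : FractionalIdeal (nonZeroDivisors R) K) * (J * I') by ring,
                hJI, mul_one]
          _ ≤ I' * ((J : FractionalIdeal (nonZeroDivisors R) K) * M) := h2
          _ = (M : FractionalIdeal (nonZeroDivisors R) K) := by
              rw [show I' * ((J : FractionalIdeal (nonZeroDivisors R) K) * M)
                = ((J  : FractionalIdeal (nonZeroDivisors R) K) * I') * M by ring, hJI, one_mul]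
      rw [coeIdeal_le_coeIdeal K] at hfrac
      exact (Ideal.span_singleton_le_iff_mem M).mp hfrac
    · intro hx
      have : x * a ∈ J * M := mul_comm a x ▸ Ideal.mul_mem_mul haJ hx
      simpa [smul_eq_mul] using this
  have hrange : LinearMap.range g
      = Submodule.map ((J * M : Ideal R) : Submodule R R).mkQ (J : Submodule R R) := by
    rw [hg, LinearMap.range_comp, ← LinearMap.span_singleton_eq_range]
    apply le_antisymm
    · exact Submodule.map_mono (by rw [← Ideal.span, Ideal.span_singleton_le_iff_mem]; exact haJ)
    · rintro y ⟨z, hz, rfl⟩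
      have hz' : z ∈ (Ideal.span {a} : Ideal R) ⊔ (J * M) := hJa ▸ hz
      obtain ⟨c, hc, w, hw, rfl⟩ := Submodule.mem_sup.mp hz'
      refine ⟨c, hc, ?_⟩
      show ((J * M : Ideal R) : Submodule R R).mkQ c = Submodule.Quotient.mk (c + w)
      rw [Submodule.mkQ_apply, Submodule.Quotient.eq]
      simpa using neg_mem hw
  have hcardker : Nat.card (R ⧸ M) =
      Nat.card (Submodule.map ((J * M : Ideal R) : Submodule R R).mkQ (J : Submodule R R)) := by
    have e := g.quotKerEquivRange
    rw [hker, hrange] at e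
    exact Nat.card_congr e.toEquiv
  rw [← key, ← hcardker, mul_comm]

end Aux2


set_option maxHeartbeats 1000000 in
theorem stmt16 {K : Type*} [Field K] [NumberField K]
    (A : Subalgebra ℤ K) (hfree : Module.Free ℤ ↥A)
    (hrank : Module.finrank ℤ ↥A = Module.finrank ℚ K)
    [IsFractionRing ↥A K]
    (J H : Ideal ↥A) (hJ : J ≠ ⊥) (hH : H ≠ ⊥)
    (hinv : (∃ I' : FractionalIdeal (nonZeroDivisors ↥A) K,
                (J : FractionalIdeal (nonZeroDivisors ↥A) K) * I' = 1) ∨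
            (∃ I' : FractionalIdeal (nonZeroDivisors ↥A) K,
                (H : FractionalIdeal (nonZeroDivisors ↥A) K) * I' = 1)) :
    Nat.card (↥A ⧸ (J * H)) = Nat.card (↥A ⧸ J) * Nat.card (↥A ⧸ H) ∧
    ((∃ I' : FractionalIdeal (nonZeroDivisors ↥A) K,
        (J : FractionalIdeal (nonZeroDivisors ↥A) K) * I' = 1) →
      ∀ m : ℕ, Nat.card (↥A ⧸ J ^ m) = Nat.card (↥A ⧸ J) ^ m) := by
  haveI := hfree
  haveI hfinA : Module.Finite ℤ ↥A := by
    apply Module.finite_of_finrank_pos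
    rw [hrank]
    exact Module.finrank_pos
  have hfin : ∀ I : Ideal ↥A, I ≠ ⊥ → Finite (↥A ⧸ I) := fun I hI =>
    Ideal.finiteQuotientOfFreeOfNeBot I hI
  have main : ∀ J' M : Ideal ↥A, M ≠ ⊥ →
      (∃ I' : FractionalIdeal (nonZeroDivisors ↥A) K,
        (J' : FractionalIdeal (nonZeroDivisors ↥A) K) * I' = 1) →
      Nat.card (↥A ⧸ (J' * M)) = Nat.card (↥A ⧸ J') * Nat.card (↥A ⧸ M) := by
    rintro J' M hM ⟨I', hI'⟩
    exact aux_card_mul hfin J' M hM (aux_exists_generator_mod hfin J' M hM I' hI') I' hI'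
  constructor
  · rcases hinv with h | h
    · exact main J H hH h
    · rw [mul_comm J H, main H J hJ h, mul_comm]
  · rintro h m
    have hpow : ∀ n : ℕ, J ^ n ≠ ⊥ := by
      intro n hn
      obtain ⟨x, hxJ, hx0⟩ := Submodule.exists_mem_ne_zero_of_ne_bot hJ
      have : x ^ n ∈ J ^ n := Ideal.pow_mem_pow hxJ n
      rw [hn] at this
      exact pow_ne_zero n hx0 (by simpa using this)
    induction m with
    | zero =>
      rw [pow_zero, pow_zero, Ideal.one_eq_top]
      haveI : Subsingleton (↥A ⧸ (⊤ : Ideal ↥A)) :=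
        Submodule.Quotient.subsingleton_iff.mpr rfl
      exact Nat.card_of_subsingleton 0
    | succ n ih =>
      rw [pow_succ, mul_comm (J ^ n) J, main J (J ^ n) (hpow n) h, ih, pow_succ, mul_comm]
end

section
/- Let A ⊆ B be commutative rings. Then A is integrally closed in B if and only if whenever f ∈ A[X] factors as f = g·h in B[X] with g and h monic, both g and h lie in A[X]. -/
open Polynomial

universe u

lemma splitAux (n : ℕ) :
    ∀ {B : Type u} [CommRing B] (p : B[X]), p.Monic → p.natDegree = n →
    ∃ (C : Type u) (_ : CommRing C) (ψ : B →+* C), Function.Injective ψ ∧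
      ∃ s : Multiset C, p.map ψ = (s.map fun r => X - Polynomial.C r).prod := by
  induction n with
  | zero =>
    intro B _ p hp hd
    refine ⟨B, inferInstance, RingHom.id B, fun a b hab => hab, 0, ?_⟩
    simp [hp.natDegree_eq_zero.mp hd]
  | succ n ih =>
    intro B _ p hp hd
    set ψ₁ := AdjoinRoot.of p with hψ₁
    have hdegpos : 0 < p.degree := by
      rw [← natDegree_pos_iff_degree_pos]; omega
    have hinj : Function.Injective ψ₁ := by
      intro a b hab
      by_contra hne
      have h0 : Polynomial.C (a - b) ≠ 0 := fun hc =>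
        hne (sub_eq_zero.mp (by simpa using congrArg (fun q => Polynomial.coeff q 0) hc))
      have hd2 : (Polynomial.C (a - b)).degree < p.degree :=
        lt_of_le_of_lt (degree_C_le) hdegpos
      refine AdjoinRoot.mk_ne_zero_of_degree_lt hp h0 hd2 ?_
      have : ψ₁ (a - b) = 0 := by rw [map_sub, hab, sub_self]
      rw [AdjoinRoot.mk_C]
      exact this
    have hBnt : Nontrivial B := by
      by_contra hnt
      have : Subsingleton B := not_nontrivial_iff_subsingleton.mp hnt
      have : p = 0 := Subsingleton.elim p 0
      simp [this] at hd
    have hCnt : Nontrivial (AdjoinRoot p) :=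
      ⟨ψ₁ 0, ψ₁ 1, fun hc => zero_ne_one (hinj hc)⟩
    set r := AdjoinRoot.root p
    have hroot : IsRoot (p.map ψ₁) r := by
      show eval r (p.map ψ₁) = 0
      rw [eval_map]
      exact AdjoinRoot.eval₂_root p
    set q := (p.map ψ₁) /ₘ (X - Polynomial.C r) with hq
    have heq : (X - Polynomial.C r) * q = p.map ψ₁ :=
      (mul_divByMonic_eq_iff_isRoot).mpr hroot
    have hqm : q.Monic := (monic_X_sub_C r).of_mul_monic_left (heq ▸ hp.map ψ₁)
    have hqd : q.natDegree = n := by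
      have h1 : (p.map ψ₁).natDegree = n + 1 := by rw [hp.natDegree_map]; exact hd
      have h2 := (monic_X_sub_C r).natDegree_mul hqm
      rw [heq, h1, natDegree_X_sub_C] at h2
      omega
    obtain ⟨C, instC, ψ₂, hinj₂, s, hs⟩ := ih q hqm hqd
    refine ⟨C, instC, ψ₂.comp ψ₁, hinj₂.comp hinj, ψ₂ r ::ₘ s, ?_⟩
    rw [← Polynomial.map_map, ← heq, Polynomial.map_mul, Polynomial.map_sub, map_X, map_C,
      hs, Multiset.map_cons, Multiset.prod_cons]

lemma coeffProdMem {C : Type*} [CommRing C] (R₀ : Subring C) (s : Multiset C)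
    (hs : ∀ x ∈ s, x ∈ R₀) (n : ℕ) :
    ((s.map fun r => X - Polynomial.C r).prod).coeff n ∈ R₀ := by
  induction s using Multiset.induction generalizing n with
  | empty =>
    simp only [Multiset.map_zero, Multiset.prod_zero, coeff_one]
    split
    · exact one_mem R₀
    · exact zero_mem R₀
  | cons a s ihs =>
    have ha : a ∈ R₀ := hs a (Multiset.mem_cons_self a s)
    have hs' : ∀ x ∈ s, x ∈ R₀ := fun x hx => hs x (Multiset.mem_cons_of_mem hx)
    rw [Multiset.map_cons, Multiset.prod_cons, sub_mul, coeff_sub, coeff_C_mul]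
    refine sub_mem ?_ (mul_mem ha (ihs hs' n))
    cases n with
    | zero =>
      simp only [mul_coeff_zero, coeff_X_zero, zero_mul]
      exact zero_mem R₀
    | succ m => rw [coeff_X_mul]; exact ihs hs' m

lemma coeffMemRange {A B : Type*} [CommRing A] [CommRing B] (φ : A →+* B)
    (hφ : Function.Injective φ)
    (H : ∀ b : B, (∃ f : Polynomial A, f.Monic ∧ Polynomial.eval₂ φ b f = 0) →
        ∃ a : A, φ a = b)
    (f : Polynomial A) (g h : Polynomial B) (hg : g.Monic) (hh : h.Monic)
    (hfgh : f.map φ = g * h) (n : ℕ) : g.coeff n ∈ Set.range φ := by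
  have hfm : f.Monic := by
    have : (f.map φ).Monic := hfgh ▸ hg.mul hh
    exact monic_of_injective hφ this
  obtain ⟨C, instC, ψ, hψ, s, hs⟩ := splitAux g.natDegree g hg rfl
  have hroot : ∀ r ∈ s, (ψ.comp φ).IsIntegralElem r := by
    intro r hr
    refine ⟨f, hfm, ?_⟩
    have : eval₂ (ψ.comp φ) r f = ((g * h).map ψ).eval r := by
      rw [eval₂_eq_eval_map, ← hfgh, Polynomial.map_map]
    rw [this, Polynomial.map_mul, eval_mul, hs, eval_multiset_prod]
    have h0 : (0 : C) ∈ (s.map fun x => X - Polynomial.C x).map (eval r) := by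
      rw [Multiset.map_map]
      refine Multiset.mem_map.mpr ⟨r, hr, by simp⟩
    rw [Multiset.prod_eq_zero h0, zero_mul]
  have hcoeff : (ψ.comp φ).IsIntegralElem (ψ (g.coeff n)) := by
    apply IsIntegral.of_mem_closure'' {x : C | x ∈ s} hroot
    have : ψ (g.coeff n) = ((s.map fun r => X - Polynomial.C r).prod).coeff n := by
      rw [← hs, coeff_map]
    rw [this]
    exact coeffProdMem (Subring.closure {x : C | x ∈ s}) s
      (fun x hx => Subring.subset_closure hx) n
  obtain ⟨p, hpm, hp⟩ := hcoeff
  refine H (g.coeff n) ⟨p, hpm, hψ ?_⟩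
  rw [hom_eval₂, map_zero]
  exact hp

theorem stmt17 {A B : Type*} [CommRing A] [CommRing B] (φ : A →+* B)
    (hφ : Function.Injective φ) :
    (∀ b : B, (∃ f : Polynomial A, f.Monic ∧ Polynomial.eval₂ φ b f = 0) →
        ∃ a : A, φ a = b) ↔
    (∀ (f : Polynomial A) (g h : Polynomial B), g.Monic → h.Monic →
        f.map φ = g * h →
        (∃ g₀ : Polynomial A, g₀.map φ = g) ∧ (∃ h₀ : Polynomial A, h₀.map φ = h)) := by
  constructor
  · intro H f g h hg hh hfgh
    constructor
    · exact (mem_lifts g).mp ((lifts_iff_coeff_lifts g).mpr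
        (coeffMemRange φ hφ H f g h hg hh hfgh))
    · exact (mem_lifts h).mp ((lifts_iff_coeff_lifts h).mpr
        (coeffMemRange φ hφ H f h g hh hg (by rw [hfgh, mul_comm])))
  · intro H b ⟨f, hfm, hf⟩
    have hroot : IsRoot (f.map φ) b := by
      show eval b (f.map φ) = 0
      rw [eval_map]; exact hf
    set q := (f.map φ) /ₘ (X - Polynomial.C b) with hq
    have heq : f.map φ = (X - Polynomial.C b) * q :=
      ((mul_divByMonic_eq_iff_isRoot).mpr hroot).symm
    have hqm : q.Monic := (monic_X_sub_C b).of_mul_monic_left (heq ▸ hfm.map φ)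
    obtain ⟨⟨g₀, hg₀⟩, -⟩ := H f (X - Polynomial.C b) q (monic_X_sub_C b) hqm heq
    refine ⟨-g₀.coeff 0, ?_⟩
    have := congrArg (fun p => Polynomial.coeff p 0) hg₀
    simp only [coeff_map, coeff_sub, coeff_X_zero, coeff_C_zero, zero_sub] at this
    rw [map_neg, this, neg_neg]
end

section
/- Let A ⊆ B be commutative rings with B an integral domain and A integrally closed in B. Then every monic polynomial f ∈ A[X] that is irreducible in A[X] remains irreducible in B[X]. -/
open Polynomial

/-- A monic divisor of `f.map φ` lifts to a monic polynomial over `A`, when `A` is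
integrally closed in `B`. -/
lemma stmt18_key {A B : Type*} [CommRing A] [CommRing B] [IsDomain B] (φ : A →+* B)
    (hφ : Function.Injective φ)
    (hic : ∀ b : B, (∃ f : Polynomial A, f.Monic ∧ Polynomial.eval₂ φ b f = 0) →
        ∃ a : A, φ a = b)
    (f : Polynomial A) (hf : f.Monic) {g : Polynomial B} (hg : g.Monic)
    (hdvd : g ∣ f.map φ) : ∃ G : Polynomial A, G.Monic ∧ G.map φ = g := by
  classical
  let K := FractionRing B
  letI : Algebra A K := ((algebraMap B K).comp φ).toAlgebra
  have halg : algebraMap A K = (algebraMap B K).comp φ := rfl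
  have hιinj : Function.Injective (algebraMap B K) := IsFractionRing.injective B K
  have hmem : (g.map (algebraMap B K)) ∈
      lifts (algebraMap (integralClosure A K) K) := by
    apply integralClosure.mem_lifts_of_monic_of_dvd_map K hf (hg.map _)
    rw [halg, ← map_map]
    exact Polynomial.map_dvd _ hdvd
  rw [lifts_iff_coeff_lifts] at hmem
  have hcoeff : ∀ n, g.coeff n ∈ Set.range φ := by
    intro n
    obtain ⟨x, hx⟩ := hmem n
    have hxint : IsIntegral A (algebraMap B K (g.coeff n)) := by
      rw [← coeff_map, ← hx]
      exact x.2
    obtain ⟨p, hpmonic, hpeval⟩ := hxint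
    refine hic _ ⟨p, hpmonic, hιinj ?_⟩
    rw [map_zero]
    have := Polynomial.hom_eval₂ p φ (algebraMap B K) (g.coeff n)
    rw [this, ← halg]
    exact hpeval
  have hlift : g ∈ lifts φ := (lifts_iff_coeff_lifts g).2 hcoeff
  obtain ⟨G, hGmap, _, hGmonic⟩ := lifts_and_degree_eq_and_monic hlift hg
  exact ⟨G, hGmonic, hGmap⟩

theorem stmt18 {A B : Type*} [CommRing A] [CommRing B] [IsDomain B] (φ : A →+* B)
    (hφ : Function.Injective φ)
    (hic : ∀ b : B, (∃ f : Polynomial A, f.Monic ∧ Polynomial.eval₂ φ b f = 0) →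
        ∃ a : A, φ a = b)
    (f : Polynomial A) (hf : f.Monic) (hirr : Irreducible f) :
    Irreducible (f.map φ) := by
  classical
  have hmapinj : Function.Injective (Polynomial.map φ) :=
    fun p q h => Polynomial.map_injective φ hφ h
  constructor
  · intro hu
    have h1 : f.map φ = 1 := (hf.map φ).isUnit_iff.mp hu
    have : f = 1 := hmapinj (by simpa using h1)
    exact hirr.not_isUnit (this ▸ isUnit_one)
  · intro g h hgh
    by_contra hcon
    push_neg at hcon
    obtain ⟨hgne, hhne⟩ := hcon
    have hlc : g.leadingCoeff * h.leadingCoeff = 1 := by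
      rw [← leadingCoeff_mul, ← hgh, (hf.map φ).leadingCoeff]
    set u := g.leadingCoeff
    set v := h.leadingCoeff
    have hvu : v * u = 1 := by rwa [mul_comm] at hlc
    set g₁ := C v * g with hg₁def
    set h₁ := C u * h with hh₁def
    have hg₁monic : g₁.Monic := by
      have hu0 : u ≠ 0 := left_ne_zero_of_mul_eq_one hlc
      have hv0 : v ≠ 0 := right_ne_zero_of_mul_eq_one hlc
      unfold g₁
      rw [Polynomial.Monic, leadingCoeff_mul, leadingCoeff_C]
      exact hvu
    have hh₁monic : h₁.Monic := by
      have hu0 : u ≠ 0 := left_ne_zero_of_mul_eq_one hlc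
      unfold h₁
      rw [Polynomial.Monic, leadingCoeff_mul, leadingCoeff_C]
      exact hlc
    have hprod : g₁ * h₁ = f.map φ := by
      unfold g₁ h₁
      rw [mul_mul_mul_comm, ← C_mul, hvu, C_1, one_mul, ← hgh]
    obtain ⟨G, hGmonic, hGmap⟩ := stmt18_key φ hφ hic f hf hg₁monic
      ⟨h₁, hprod.symm⟩
    obtain ⟨H, hHmonic, hHmap⟩ := stmt18_key φ hφ hic f hf hh₁monic
      ⟨g₁, by rw [mul_comm]; exact hprod.symm⟩
    have hfGH : f = G * H := by
      apply hmapinj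
      rw [Polynomial.map_mul, hGmap, hHmap, hprod]
    have hvunit : IsUnit (C v : Polynomial B) :=
      isUnit_C.mpr (IsUnit.of_mul_eq_one u hvu)
    have huunit : IsUnit (C u : Polynomial B) :=
      isUnit_C.mpr (IsUnit.of_mul_eq_one v hlc)
    rcases hirr.isUnit_or_isUnit hfGH with hG | hH
    · apply hgne
      have : IsUnit g₁ := hGmap ▸ hG.map (mapRingHom φ)
      exact (isUnit_of_mul_isUnit_right (hg₁def ▸ this))
    · apply hhne
      have : IsUnit h₁ := hHmap ▸ hH.map (mapRingHom φ)
      exact (isUnit_of_mul_isUnit_right (hh₁def ▸ this))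
end

section
/- Let A ⊆ B be commutative rings with A integrally closed in B, and let f ∈ A[X] factor as f = g·h in B[X], where g ∈ A[X] is primitive (its coefficients generate the unit ideal of A). Then h ∈ A[X]. -/
open Polynomial

theorem stmt19 {A B : Type*} [CommRing A] [CommRing B] (φ : A →+* B)
    (hφ : Function.Injective φ)
    (hic : ∀ b : B, (∃ f : Polynomial A, f.Monic ∧ Polynomial.eval₂ φ b f = 0) →
        ∃ a : A, φ a = b)
    (f g : Polynomial A) (h : Polynomial B)
    (hprim : Ideal.span (Set.range g.coeff) = (⊤ : Ideal A))
    (hfac : f.map φ = g.map φ * h) :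
    ∃ h₀ : Polynomial A, h₀.map φ = h := by
  classical
  letI : Algebra A B := φ.toAlgebra
  have hsmul : ∀ (a : A) (x : B), a • x = φ a * x := fun a x => rfl
  set md := h.natDegree with hmd
  set M : Submodule A B := Submodule.span A (Set.range (f.map φ).coeff) with hM
  set H : Submodule A B :=
    Submodule.span A (Set.range fun i : Fin (md + 1) => h.coeff i) with hH
  have hHm : ∀ j, h.coeff j ∈ H := by
    intro j
    rcases le_or_gt j md with hj | hj
    · exact Submodule.subset_span ⟨⟨j, Nat.lt_succ_of_le hj⟩, rfl⟩
    · rw [Polynomial.coeff_eq_zero_of_natDegree_lt hj]; exact H.zero_mem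
  have hHfg : H.FG := Submodule.fg_span (Set.finite_range _)
  have key : ∀ j, h.coeff j ∈ M := by
    have hJ : M.colon H = ⊤ := by
      by_contra hne
      obtain ⟨m, hmax, hJm⟩ := Ideal.exists_le_maximal _ hne
      have hex : ∃ i, g.coeff i ∉ m := by
        by_contra hall
        push_neg at hall
        have hle : Ideal.span (Set.range g.coeff) ≤ m :=
          Ideal.span_le.mpr (by rintro x ⟨i, rfl⟩; exact hall i)
        rw [hprim] at hle
        exact hmax.ne_top (top_le_iff.mp hle)
      obtain ⟨i0, hi0⟩ := hex
      set c := Nat.findGreatest (fun i => g.coeff i ∉ m) g.natDegree with hc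
      have hi0le : i0 ≤ g.natDegree :=
        le_natDegree_of_ne_zero (fun h0 => hi0 (h0 ▸ m.zero_mem))
      have hcs : g.coeff c ∉ m := Nat.findGreatest_spec (P := fun i => g.coeff i ∉ m) hi0le hi0
      have hgt : ∀ i, c < i → g.coeff i ∈ m := by
        intro i hci
        rcases le_or_gt i g.natDegree with hle | hlt
        · by_contra hmem
          exact Nat.findGreatest_is_greatest hci hle hmem
        · rw [coeff_eq_zero_of_natDegree_lt hlt]; exact m.zero_mem
      set W : Submodule A B := M ⊔ (m • H) with hW
      have hMW : M ≤ W := le_sup_left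
      have hmHW : (m • H : Submodule A B) ≤ W := le_sup_right
      have keyW : ∀ n, ∀ j, md < j + n → g.coeff c ^ n • h.coeff j ∈ W := by
        intro n
        induction n with
        | zero =>
          intro j hj
          rw [coeff_eq_zero_of_natDegree_lt (by omega : md < j), smul_zero]
          exact W.zero_mem
        | succ n ih =>
          intro j hj
          have hmem : ((c, j) : ℕ × ℕ) ∈ Finset.HasAntidiagonal.antidiagonal (c + j) := by simp
          have hq : φ (g.coeff c) * h.coeff j
              = (f.map φ).coeff (c + j)
                - ∑ p ∈ (Finset.HasAntidiagonal.antidiagonal (c + j)).erase (c, j),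
                    φ (g.coeff p.1) * h.coeff p.2 := by
            rw [hfac, coeff_mul, ← Finset.add_sum_erase _ _ hmem]
            simp only [coeff_map]
            ring
          have heq : g.coeff c ^ (n + 1) • h.coeff j
              = g.coeff c ^ n • ((f.map φ).coeff (c + j))
                - ∑ p ∈ (Finset.HasAntidiagonal.antidiagonal (c + j)).erase (c, j),
                    g.coeff c ^ n • (φ (g.coeff p.1) * h.coeff p.2) := by
            rw [pow_succ, mul_smul, hsmul (g.coeff c), hq]
            rw [smul_sub, Finset.smul_sum]
          rw [heq]
          refine W.sub_mem (hMW (Submodule.smul_mem _ _ (Submodule.subset_span ⟨c + j, rfl⟩)))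
            (Submodule.sum_mem _ ?_)
          rintro ⟨i, j'⟩ hp
          have hpsum : i + j' = c + j := Finset.HasAntidiagonal.mem_antidiagonal.mp (Finset.mem_of_mem_erase hp)
          have hpne : (i, j') ≠ (c, j) := Finset.ne_of_mem_erase hp
          have hine : i ≠ c := by
            rintro rfl
            have hj'eq : j' = j := by omega
            exact hpne (by rw [hj'eq])
          rcases lt_or_gt_of_ne hine with hlt | hgt'
          · -- i < c, so j' > j, use ih
            have hj' : md < j' + n := by omega
            have : g.coeff c ^ n • (φ (g.coeff i) * h.coeff j')
                = g.coeff i • (g.coeff c ^ n • h.coeff j') := by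
              rw [smul_comm, hsmul (g.coeff i)]
            rw [this]
            exact W.smul_mem _ (ih j' hj')
          · -- i > c, coefficient in m
            have : g.coeff c ^ n • (φ (g.coeff i) * h.coeff j')
                = (g.coeff c ^ n * g.coeff i) • h.coeff j' := by
              rw [mul_smul, hsmul (g.coeff i)]
            rw [this]
            exact hmHW (Submodule.smul_mem_smul (m.mul_mem_left _ (hgt i hgt')) (hHm j'))
      -- H ≤ W
      have hTn : g.coeff c ^ (md + 1) ∉ m := fun hmem => hcs (hmax.isPrime.mem_of_pow_mem _ hmem)
      have hHW : H ≤ W := by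
        obtain ⟨v, z, hz, hvz⟩ := hmax.exists_inv hTn
        rw [hH, Submodule.span_le]
        rintro x ⟨⟨j, hjlt⟩, rfl⟩
        have hxeq : h.coeff j = z • h.coeff j + v • (g.coeff c ^ (md + 1) • h.coeff j) := by
          rw [smul_smul, ← add_smul, add_comm, hvz, one_smul]
        rw [SetLike.mem_coe]
        show h.coeff j ∈ W
        rw [hxeq]
        exact W.add_mem (hmHW (Submodule.smul_mem_smul hz (hHm j)))
          (W.smul_mem _ (keyW (md + 1) j (by omega)))
      -- Nakayama on quotient
      have hHle : H ≤ M ⊔ m • H := hHW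
      set Q := B ⧸ M
      set H' : Submodule A Q := H.map M.mkQ with hH'
      have hH'fg : H'.FG := hHfg.map _
      have hH'le : H' ≤ m • H' := by
        rw [hH', ← Submodule.map_smul'']
        refine (Submodule.map_mono hHle).trans ?_
        rw [Submodule.map_sup]
        have : M.map M.mkQ = ⊥ := by
          rw [eq_bot_iff]
          rintro x ⟨y, hy, rfl⟩
          simpa [Submodule.Quotient.mk_eq_zero] using hy
        rw [this, bot_sup_eq]
      obtain ⟨r, hr1, hr0⟩ :=
        Submodule.exists_sub_one_mem_and_smul_eq_zero_of_fg_of_le_smul m H' hH'fg hH'le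
      have hrJ : r ∈ M.colon H := by
        rw [Submodule.mem_colon]
        intro x hx
        have : r • M.mkQ x = 0 := hr0 _ (Submodule.mem_map_of_mem hx)
        rwa [← map_smul, Submodule.mkQ_apply, Submodule.Quotient.mk_eq_zero] at this
      have : (1 : A) ∈ m := by
        have := m.sub_mem (hJm hrJ) hr1
        simpa using this
      exact hmax.ne_top (Ideal.eq_top_of_isUnit_mem _ this isUnit_one)
    intro j
    have h1 : (1 : A) ∈ M.colon H := hJ ▸ Submodule.mem_top
    simpa using Submodule.mem_colon.mp h1 _ (hHm j)
  have hrange : ∀ j, h.coeff j ∈ Set.range (φ : A → B) := by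
    intro j
    have hle : M ≤ Subalgebra.toSubmodule (⊥ : Subalgebra A B) := by
      rw [hM, Submodule.span_le]
      rintro x ⟨k, rfl⟩
      rw [SetLike.mem_coe, Subalgebra.mem_toSubmodule, Algebra.mem_bot, coeff_map]
      exact ⟨f.coeff k, rfl⟩
    have := hle (key j)
    rwa [Subalgebra.mem_toSubmodule, Algebra.mem_bot] at this
  exact (Polynomial.mem_lifts _).mp ((Polynomial.lifts_iff_coeff_lifts _).mpr hrange)
end
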